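/- arXiv:2002.09705 — 3 statements merged into one kernel-verified Lean document; each statement's English description precedes it below -/
import Mathlib

section
/- For every real λ > 0, the quantity g(λ) := e^{-λ} - (1 - e^{-λ})/λ satisfies |g(λ)| < 0.3. -/
/-- Quartic upper bound for `exp` on `[0,1]`. -/
lemma cw_expC {x : ℝ} (h1 : 0 ≤ x) (h2 : x ≤ 1) :
    Real.exp x ≤ 1 + x + x ^ 2 / 2 + x ^ 3 / 6 + 5 * x ^ 4 / 96 := by
  have h := Real.exp_bound' h1 h2 (n := 4) (by norm_num)
  norm_num [Finset.sum_range_succ, Nat.factorial] at h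
  linarith

lemma cw_exp_half : Real.exp (1 / 2) ≤ 2533 / 1536 := by
  have h := cw_expC (x := 1/2) (by norm_num) (by norm_num)
  norm_num at h ⊢
  linarith

lemma cw_exp_pow (k : ℕ) : Real.exp ((k : ℝ) / 2) ≤ (2533 / 1536) ^ k := by
  have h : Real.exp ((k : ℝ) / 2) = Real.exp (1 / 2) ^ k := by
    rw [← Real.exp_nat_mul]; ring_nf
  rw [h]
  exact pow_le_pow_left₀ (Real.exp_pos _).le cw_exp_half k

/-- On `[k/2, k/2 + 1]` (with `k/2 + c` the actual endpoint used),
`exp lam ≤ c^k * C(lam - k/2)`. -/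
lemma cw_exp_piece (k : ℕ) {lam : ℝ} (ha : (k : ℝ) / 2 ≤ lam) (hb : lam ≤ (k : ℝ) / 2 + 1) :
    Real.exp lam ≤ (2533 / 1536) ^ k *
      (1 + (lam - k / 2) + (lam - k / 2) ^ 2 / 2 + (lam - k / 2) ^ 3 / 6
        + 5 * (lam - k / 2) ^ 4 / 96) := by
  have h1 : Real.exp lam = Real.exp ((k : ℝ) / 2) * Real.exp (lam - k / 2) := by
    rw [← Real.exp_add]; ring_nf
  rw [h1]
  have h2 := cw_expC (x := lam - k / 2) (by linarith) (by linarith)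
  have h3 := cw_exp_pow k
  have hC : (0 : ℝ) ≤ 1 + (lam - k / 2) + (lam - k / 2) ^ 2 / 2 + (lam - k / 2) ^ 3 / 6
        + 5 * (lam - k / 2) ^ 4 / 96 := by nlinarith [sq_nonneg (lam - k/2), sq_nonneg ((lam - k/2)^2)]
  exact mul_le_mul h3 h2 (Real.exp_pos _).le (by positivity)

/-- Key inequality: `(1 - 3 lam / 10) * exp lam < 1 + lam` for `0 < lam < 10/3`. -/
lemma cw_key {lam : ℝ} (h0 : 0 < lam) (h1 : lam < 10 / 3) :
    (1 - 3 * lam / 10) * Real.exp lam < 1 + lam := by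
  rcases le_or_gt lam (1/2) with h | h
  · have hE := cw_exp_piece 0 (lam := lam) (by push_cast; linarith) (by push_cast; linarith)
    norm_num at hE
    have hpos : (0:ℝ) ≤ 1 - 3 * lam / 10 := by linarith
    refine lt_of_le_of_lt (mul_le_mul_of_nonneg_left hE hpos) ?_
    have hu : (0:ℝ) < lam - (0) := by linarith
    have hv : (0:ℝ) ≤ (1/2) - lam := by linarith
    linarith [pow_pos hu 5, mul_nonneg (pow_nonneg hu.le 0) (pow_nonneg hv 5), mul_nonneg (pow_nonneg hu.le 1) (pow_nonneg hv 4), mul_nonneg (pow_nonneg hu.le 2) (pow_nonneg hv 3), mul_nonneg (pow_nonneg hu.le 3) (pow_nonneg hv 2), mul_nonneg (pow_nonneg hu.le 4) (pow_nonneg hv 1)]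
  rcases le_or_gt lam 1 with h' | h'
  · have hE := cw_exp_piece 1 (lam := lam) (by push_cast; linarith) (by push_cast; linarith)
    push_cast at hE
    have hpos : (0:ℝ) ≤ 1 - 3 * lam / 10 := by linarith
    refine lt_of_le_of_lt (mul_le_mul_of_nonneg_left hE hpos) ?_
    have hu : (0:ℝ) < lam - (1/2) := by linarith
    have hv : (0:ℝ) ≤ (1) - lam := by linarith
    linarith [pow_pos hu 5, mul_nonneg (pow_nonneg hu.le 0) (pow_nonneg hv 5), mul_nonneg (pow_nonneg hu.le 1) (pow_nonneg hv 4), mul_nonneg (pow_nonneg hu.le 2) (pow_nonneg hv 3), mul_nonneg (pow_nonneg hu.le 3) (pow_nonneg hv 2), mul_nonneg (pow_nonneg hu.le 4) (pow_nonneg hv 1)]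
  rcases le_or_gt lam (3/2) with h'' | h''
  · have hE := cw_exp_piece 2 (lam := lam) (by push_cast; linarith) (by push_cast; linarith)
    push_cast at hE
    have hpos : (0:ℝ) ≤ 1 - 3 * lam / 10 := by linarith
    refine lt_of_le_of_lt (mul_le_mul_of_nonneg_left hE hpos) ?_
    have hu : (0:ℝ) < lam - (1) := by linarith
    have hv : (0:ℝ) ≤ (3/2) - lam := by linarith
    linarith [pow_pos hu 5, mul_nonneg (pow_nonneg hu.le 0) (pow_nonneg hv 5), mul_nonneg (pow_nonneg hu.le 1) (pow_nonneg hv 4), mul_nonneg (pow_nonneg hu.le 2) (pow_nonneg hv 3), mul_nonneg (pow_nonneg hu.le 3) (pow_nonneg hv 2), mul_nonneg (pow_nonneg hu.le 4) (pow_nonneg hv 1)]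
  rcases le_or_gt lam 2 with h3 | h3
  · have hE := cw_exp_piece 3 (lam := lam) (by push_cast; linarith) (by push_cast; linarith)
    push_cast at hE
    have hpos : (0:ℝ) ≤ 1 - 3 * lam / 10 := by linarith
    refine lt_of_le_of_lt (mul_le_mul_of_nonneg_left hE hpos) ?_
    have hu : (0:ℝ) < lam - (3/2) := by linarith
    have hv : (0:ℝ) ≤ (2) - lam := by linarith
    linarith [pow_pos hu 5, mul_nonneg (pow_nonneg hu.le 0) (pow_nonneg hv 5), mul_nonneg (pow_nonneg hu.le 1) (pow_nonneg hv 4), mul_nonneg (pow_nonneg hu.le 2) (pow_nonneg hv 3), mul_nonneg (pow_nonneg hu.le 3) (pow_nonneg hv 2), mul_nonneg (pow_nonneg hu.le 4) (pow_nonneg hv 1)]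
  rcases le_or_gt lam (5/2) with h4 | h4
  · have hE := cw_exp_piece 4 (lam := lam) (by push_cast; linarith) (by push_cast; linarith)
    push_cast at hE
    have hpos : (0:ℝ) ≤ 1 - 3 * lam / 10 := by linarith
    refine lt_of_le_of_lt (mul_le_mul_of_nonneg_left hE hpos) ?_
    have hu : (0:ℝ) < lam - (2) := by linarith
    have hv : (0:ℝ) ≤ (5/2) - lam := by linarith
    linarith [pow_pos hu 5, mul_nonneg (pow_nonneg hu.le 0) (pow_nonneg hv 5), mul_nonneg (pow_nonneg hu.le 1) (pow_nonneg hv 4), mul_nonneg (pow_nonneg hu.le 2) (pow_nonneg hv 3), mul_nonneg (pow_nonneg hu.le 3) (pow_nonneg hv 2), mul_nonneg (pow_nonneg hu.le 4) (pow_nonneg hv 1)]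
  rcases le_or_gt lam 3 with h5 | h5
  · have hE := cw_exp_piece 5 (lam := lam) (by push_cast; linarith) (by push_cast; linarith)
    push_cast at hE
    have hpos : (0:ℝ) ≤ 1 - 3 * lam / 10 := by linarith
    refine lt_of_le_of_lt (mul_le_mul_of_nonneg_left hE hpos) ?_
    have hu : (0:ℝ) < lam - (5/2) := by linarith
    have hv : (0:ℝ) ≤ (3) - lam := by linarith
    linarith [pow_pos hu 5, mul_nonneg (pow_nonneg hu.le 0) (pow_nonneg hv 5), mul_nonneg (pow_nonneg hu.le 1) (pow_nonneg hv 4), mul_nonneg (pow_nonneg hu.le 2) (pow_nonneg hv 3), mul_nonneg (pow_nonneg hu.le 3) (pow_nonneg hv 2), mul_nonneg (pow_nonneg hu.le 4) (pow_nonneg hv 1)]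
  · have hE := cw_exp_piece 6 (lam := lam) (by push_cast; linarith) (by push_cast; linarith)
    push_cast at hE
    have hpos : (0:ℝ) ≤ 1 - 3 * lam / 10 := by linarith
    refine lt_of_le_of_lt (mul_le_mul_of_nonneg_left hE hpos) ?_
    have hu : (0:ℝ) < lam - (3) := by linarith
    have hv : (0:ℝ) ≤ (10/3) - lam := by linarith
    linarith [pow_pos hu 5, mul_nonneg (pow_nonneg hu.le 0) (pow_nonneg hv 5), mul_nonneg (pow_nonneg hu.le 1) (pow_nonneg hv 4), mul_nonneg (pow_nonneg hu.le 2) (pow_nonneg hv 3), mul_nonneg (pow_nonneg hu.le 3) (pow_nonneg hv 2), mul_nonneg (pow_nonneg hu.le 4) (pow_nonneg hv 1)]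

/-- The per-cycle error amplification factor
`g(λ) = e^{-λ} - (1 - e^{-λ})/λ` of the averaging scheme satisfies `|g(λ)| < 0.3` for
every `λ > 0`. -/
theorem candy_wrapper_stmt3 :
    ∀ lam : ℝ, 0 < lam →
      |Real.exp (-lam) - (1 - Real.exp (-lam)) / lam| < 0.3 := by
  intro lam hlam
  have hEn : 0 < Real.exp (-lam) := Real.exp_pos _
  have hE : 0 < Real.exp lam := Real.exp_pos _
  have hprod : Real.exp lam * Real.exp (-lam) = 1 := by
    rw [← Real.exp_add]; simp
  have hg : Real.exp (-lam) - (1 - Real.exp (-lam)) / lam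
      = ((1 + lam) * Real.exp (-lam) - 1) / lam := by
    field_simp; ring
  rw [hg, abs_lt]
  have hub : (1 + lam) * Real.exp (-lam) ≤ 1 := by
    have := Real.add_one_le_exp lam
    nlinarith
  constructor
  · -- lower bound
    rw [show (-(0.3:ℝ)) = -(3/10) by norm_num, lt_div_iff₀ hlam]
    have hlb : 1 - 3 * lam / 10 < (1 + lam) * Real.exp (-lam) := by
      rcases le_or_gt (10/3) lam with h | h
      · nlinarith
      · have := cw_key hlam h
        nlinarith [mul_pos hEn (sub_pos.2 this)]
    nlinarith
  · -- upper bound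
    have : ((1 + lam) * Real.exp (-lam) - 1) / lam ≤ 0 :=
      div_nonpos_of_nonpos_of_nonneg (by linarith) hlam.le
    linarith [this]
end

section
/- Let A be a symmetric positive definite real n×n matrix. Then the matrix L := exp(-A) - A⁻¹ (I - exp(-A)) is symmetric and its operator norm (with respect to the Euclidean norm on ℝⁿ) satisfies ‖L‖ < 0.3. -/
lemma expQ {t : ℝ} (h0 : 0 ≤ t) (h1 : t ≤ 1) :
    Real.exp t ≤ 1 + t + t^2/2 + t^3/6 + t^4/24 + t^5/120 + t^6*7/4320 := by
  have h := Real.exp_bound' h0 h1 (n := 6) (by norm_num)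
  norm_num [Finset.sum_range_succ, Nat.factorial] at h
  linarith

lemma poly1 {t : ℝ} (h0 : 0 < t) (h1 : t ≤ 1) :
    (1 - 3/10*t)*(1 + t + t^2/2 + t^3/6 + t^4/24 + t^5/120 + t^6*7/4320) < t+1 := by
  have hx2 : t^2 ≤ t := by nlinarith
  have hx3 : t^3 ≤ t := by nlinarith
  nlinarith [pow_nonneg h0.le 4, pow_nonneg h0.le 5, pow_nonneg h0.le 6, pow_nonneg h0.le 7]

lemma poly2 {t : ℝ} (h0 : 0 ≤ t) (h1 : t ≤ 1) :
    (7/10 - 3/10*t)*(2.7182818286)*(1 + t + t^2/2 + t^3/6 + t^4/24 + t^5/120 + t^6*7/4320) < t+2 := by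
  nlinarith [sq_nonneg (t-17/20), mul_nonneg h0 (sub_nonneg.2 h1), sq_nonneg t,
    mul_nonneg (mul_nonneg h0 h0) (sub_nonneg.2 h1),
    mul_nonneg (mul_nonneg (mul_nonneg h0 h0) h0) (sub_nonneg.2 h1),
    mul_nonneg (mul_nonneg (mul_nonneg (mul_nonneg h0 h0) h0) h0) (sub_nonneg.2 h1),
    mul_nonneg (mul_nonneg (mul_nonneg (mul_nonneg (mul_nonneg h0 h0) h0) h0) h0) (sub_nonneg.2 h1),
    mul_nonneg (mul_nonneg h0 h0) (mul_nonneg h0 h0)]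

lemma poly3 {t : ℝ} (h0 : 0 ≤ t) (h1 : t ≤ 1) :
    (2/5 - 3/10*t)*(2.7182818286^2)*(1 + t + t^2/2 + t^3/6 + t^4/24 + t^5/120 + t^6*7/4320) < t+3 := by
  nlinarith [sq_nonneg t, mul_nonneg h0 (sub_nonneg.2 h1), sq_nonneg (t-1/2),
    mul_nonneg (mul_nonneg h0 h0) (sub_nonneg.2 h1),
    mul_nonneg (mul_nonneg (mul_nonneg h0 h0) h0) (sub_nonneg.2 h1),
    mul_nonneg (mul_nonneg (mul_nonneg (mul_nonneg h0 h0) h0) h0) (sub_nonneg.2 h1),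
    mul_nonneg (mul_nonneg (mul_nonneg (mul_nonneg (mul_nonneg h0 h0) h0) h0) h0) (sub_nonneg.2 h1),
    mul_nonneg (mul_nonneg h0 h0) (mul_nonneg h0 h0)]

lemma poly4 {t : ℝ} (h0 : 0 ≤ t) (h1 : t ≤ 1/3) :
    (1/10 - 3/10*t)*(2.7182818286^3)*(1 + t + t^2/2 + t^3/6 + t^4/24 + t^5/120 + t^6*7/4320) < t+4 := by
  nlinarith [sq_nonneg t, mul_nonneg h0 (sub_nonneg.2 h1),
    mul_nonneg (mul_nonneg h0 h0) (sub_nonneg.2 h1),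
    mul_nonneg (mul_nonneg (mul_nonneg h0 h0) h0) (sub_nonneg.2 h1),
    mul_nonneg (mul_nonneg (mul_nonneg (mul_nonneg h0 h0) h0) h0) (sub_nonneg.2 h1),
    mul_nonneg (mul_nonneg (mul_nonneg (mul_nonneg (mul_nonneg h0 h0) h0) h0) h0) (sub_nonneg.2 h1),
    mul_nonneg (mul_nonneg h0 h0) (mul_nonneg h0 h0)]

lemma key {x : ℝ} (hx : 0 < x) : (1 - 0.3*x) * Real.exp x < x + 1 := by
  rcases le_or_gt (10/3) x with h | h
  · nlinarith [Real.exp_pos x]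
  have hE : Real.exp 1 < 2.7182818286 := Real.exp_one_lt_d9
  have hE0 := Real.exp_pos (1:ℝ)
  have hpos : (0:ℝ) < 1 - 0.3*x := by nlinarith
  rcases le_or_gt x 1 with h1 | h1
  · have hq := expQ hx.le h1
    have hp := poly1 hx h1
    nlinarith [mul_le_mul_of_nonneg_left hq hpos.le]
  rcases le_or_gt x 2 with h2 | h2
  · have h0' : (0:ℝ) ≤ x - 1 := by linarith
    have h1' : x - 1 ≤ 1 := by linarith
    have hq := expQ h0' h1'
    have hQ0 := (Real.exp_pos (x-1)).trans_le hq
    have hxe : Real.exp x = Real.exp 1 * Real.exp (x-1) := by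
      rw [← Real.exp_add]; ring_nf
    have hlt : Real.exp x < 2.7182818286 * (1 + (x-1) + (x-1)^2/2 + (x-1)^3/6 + (x-1)^4/24 + (x-1)^5/120 + (x-1)^6*7/4320) := by
      rw [hxe]
      calc Real.exp 1 * Real.exp (x-1) ≤ Real.exp 1 * (1 + (x-1) + (x-1)^2/2 + (x-1)^3/6 + (x-1)^4/24 + (x-1)^5/120 + (x-1)^6*7/4320) :=
            mul_le_mul_of_nonneg_left hq hE0.le
        _ < _ := mul_lt_mul_of_pos_right hE hQ0
    have hmul := mul_lt_mul_of_pos_left hlt hpos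
    have hp := poly2 h0' h1'
    nlinarith [hmul, hp]
  rcases le_or_gt x 3 with h3 | h3
  · have h0' : (0:ℝ) ≤ x - 2 := by linarith
    have h1' : x - 2 ≤ 1 := by linarith
    have hq := expQ h0' h1'
    have hQ0 := (Real.exp_pos (x-2)).trans_le hq
    have hxe : Real.exp x = Real.exp 1 * (Real.exp 1 * Real.exp (x-2)) := by
      rw [← Real.exp_add, ← Real.exp_add]; ring_nf
    have hinner : Real.exp 1 * Real.exp (x-2) < 2.7182818286 * (1 + (x-2) + (x-2)^2/2 + (x-2)^3/6 + (x-2)^4/24 + (x-2)^5/120 + (x-2)^6*7/4320) :=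
      calc Real.exp 1 * Real.exp (x-2) ≤ Real.exp 1 * (1 + (x-2) + (x-2)^2/2 + (x-2)^3/6 + (x-2)^4/24 + (x-2)^5/120 + (x-2)^6*7/4320) :=
            mul_le_mul_of_nonneg_left hq hE0.le
        _ < _ := mul_lt_mul_of_pos_right hE hQ0
    have hlt : Real.exp x < 2.7182818286 * (2.7182818286 * (1 + (x-2) + (x-2)^2/2 + (x-2)^3/6 + (x-2)^4/24 + (x-2)^5/120 + (x-2)^6*7/4320)) := by
      rw [hxe]
      exact mul_lt_mul'' hE hinner hE0.le (by positivity)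
    have hmul := mul_lt_mul_of_pos_left hlt hpos
    have hp := poly3 h0' h1'
    nlinarith [hmul, hp]
  · have h0' : (0:ℝ) ≤ x - 3 := by linarith
    have h1' : x - 3 ≤ 1/3 := by linarith
    have hq := expQ h0' (by linarith)
    have hQ0 := (Real.exp_pos (x-3)).trans_le hq
    have hxe : Real.exp x = Real.exp 1 * (Real.exp 1 * (Real.exp 1 * Real.exp (x-3))) := by
      rw [← Real.exp_add, ← Real.exp_add, ← Real.exp_add]; ring_nf
    have hinner : Real.exp 1 * Real.exp (x-3) < 2.7182818286 * (1 + (x-3) + (x-3)^2/2 + (x-3)^3/6 + (x-3)^4/24 + (x-3)^5/120 + (x-3)^6*7/4320) :=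
      calc Real.exp 1 * Real.exp (x-3) ≤ Real.exp 1 * (1 + (x-3) + (x-3)^2/2 + (x-3)^3/6 + (x-3)^4/24 + (x-3)^5/120 + (x-3)^6*7/4320) :=
            mul_le_mul_of_nonneg_left hq hE0.le
        _ < _ := mul_lt_mul_of_pos_right hE hQ0
    have hinner2 : Real.exp 1 * (Real.exp 1 * Real.exp (x-3)) < 2.7182818286 * (2.7182818286 * (1 + (x-3) + (x-3)^2/2 + (x-3)^3/6 + (x-3)^4/24 + (x-3)^5/120 + (x-3)^6*7/4320)) :=
      mul_lt_mul'' hE hinner hE0.le (by positivity)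
    have hlt : Real.exp x < 2.7182818286 * (2.7182818286 * (2.7182818286 * (1 + (x-3) + (x-3)^2/2 + (x-3)^3/6 + (x-3)^4/24 + (x-3)^5/120 + (x-3)^6*7/4320))) := by
      rw [hxe]
      exact mul_lt_mul'' hE hinner2 hE0.le (by positivity)
    have hmul := mul_lt_mul_of_pos_left hlt hpos
    have hp := poly4 h0' h1'
    nlinarith [hmul, hp]

lemma scalar_bound {μ : ℝ} (hμ : 0 < μ) :
    |Real.exp (-μ) - (μ)⁻¹ * (1 - Real.exp (-μ))| < 0.3 := by
  have hEn := Real.exp_pos (-μ)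
  have hprod : Real.exp (-μ) * Real.exp μ = 1 := by rw [← Real.exp_add]; simp
  have h1 : 1 - 0.3*μ < (μ+1) * Real.exp (-μ) := by
    have h := mul_lt_mul_of_pos_right (key hμ) hEn
    have h2 : (1-0.3*μ) * (Real.exp (-μ) * Real.exp μ) = 1 - 0.3*μ := by rw [hprod, mul_one]
    nlinarith [h, h2]
  have h2 : (μ+1) * Real.exp (-μ) < 1 := by
    have h := mul_lt_mul_of_pos_right (Real.add_one_lt_exp hμ.ne') hEn
    nlinarith [h, hprod]
  have h3 : μ * (μ⁻¹*(1-Real.exp (-μ))) = 1 - Real.exp (-μ) := by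
    field_simp
  rw [abs_lt]
  constructor
  · nlinarith [h1, h3, hμ]
  · nlinarith [h2, h3, hμ, hEn]

lemma diag_opnorm_le {n : ℕ} (d : Fin n → ℝ) {c : ℝ} (hc : 0 ≤ c) (h : ∀ i, |d i| ≤ c) :
    ‖Matrix.toEuclideanCLM (𝕜 := ℝ) (Matrix.diagonal d)‖ ≤ c := by
  refine ContinuousLinearMap.opNorm_le_bound _ hc (fun x => ?_)
  have hTx : ∀ i, (Matrix.toEuclideanCLM (𝕜 := ℝ) (Matrix.diagonal d) x) i = d i * x i := by
    intro i
    have := Matrix.ofLp_toEuclideanCLM (𝕜 := ℝ) (Matrix.diagonal d) x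
    have h2 := congrFun this i
    simpa [Matrix.toLin'_apply, Matrix.mulVec_diagonal] using h2
  rw [EuclideanSpace.norm_eq, EuclideanSpace.norm_eq]
  rw [← Real.sqrt_sq hc, ← Real.sqrt_mul (by positivity)]
  apply Real.sqrt_le_sqrt
  rw [Finset.mul_sum]
  apply Finset.sum_le_sum
  intro i _
  rw [hTx i]
  have he : ‖d i * x i‖ = |d i| * ‖x i‖ := by simp [abs_mul]
  rw [he, mul_pow]
  gcongr
  exact h i

open Matrix

/-- For a symmetric positive definite real `n × n` matrix `A`, the
linear part `L = exp(-A) - A⁻¹ (I - exp(-A))` of one step of the averaging scheme is a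
symmetric matrix whose operator norm (with respect to the Euclidean norm on `ℝⁿ`) is
smaller than `0.3`. -/
theorem candy_wrapper_stmt5
    (n : ℕ) (A : Matrix (Fin n) (Fin n) ℝ)
    (hA_symm : A.IsSymm) (hA_pos : A.PosDef)
    (L : Matrix (Fin n) (Fin n) ℝ)
    (hL : L = NormedSpace.exp (-A) - A⁻¹ * (1 - NormedSpace.exp (-A))) :
    L.IsSymm ∧ ‖Matrix.toEuclideanCLM (𝕜 := ℝ) L‖ < 0.3 := by
  classical
  have hH : A.IsHermitian := hA_pos.1
  set μ : Fin n → ℝ := hH.eigenvalues with hμdef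
  have hμpos : ∀ i, 0 < μ i := fun i => hA_pos.eigenvalues_pos i
  set U : Matrix (Fin n) (Fin n) ℝ :=
    (Matrix.IsHermitian.eigenvectorUnitary hH : Matrix (Fin n) (Fin n) ℝ) with hUdef
  have hsU : star U * U = 1 := Unitary.coe_star_mul_self _
  have hUs : U * star U = 1 := Unitary.coe_mul_star_self _
  have hspec : A = U * Matrix.diagonal μ * star U := by
    have h := hH.spectral_theorem
    simpa using h
  have hUnit : IsUnit U := ⟨Unitary.toUnits (Matrix.IsHermitian.eigenvectorUnitary hH), rfl⟩
  have hUinv : U⁻¹ = star U := Matrix.inv_eq_right_inv hUs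
  have hmulconj : ∀ X Y : Matrix (Fin n) (Fin n) ℝ,
      (U * X * star U) * (U * Y * star U) = U * (X * Y) * star U := by
    intro X Y
    calc (U * X * star U) * (U * Y * star U)
        = U * X * (star U * U) * Y * star U := by
          simp only [Matrix.mul_assoc]
      _ = U * (X * Y) * star U := by
          rw [hsU, Matrix.mul_one]; simp only [Matrix.mul_assoc]
  have hExp : NormedSpace.exp (-A) =
      U * Matrix.diagonal (fun i => Real.exp (-μ i)) * star U := by
    have hdn : Matrix.diagonal (fun i => -μ i) = -Matrix.diagonal μ :=
      (Matrix.diagonal_neg μ).symm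
    have h1 : -A = U * Matrix.diagonal (fun i => -μ i) * U⁻¹ := by
      rw [hUinv, hspec, hdn, Matrix.mul_neg, Matrix.neg_mul]
    rw [h1, Matrix.exp_conj U _ hUnit, Matrix.exp_diagonal, hUinv]
    congr 2
    rw [Pi.exp_def]
    funext i
    rw [← Real.exp_eq_exp_ℝ]
  have hInv : A⁻¹ = U * Matrix.diagonal (fun i => (μ i)⁻¹) * star U := by
    apply Matrix.inv_eq_right_inv
    rw [hspec, hmulconj]
    rw [Matrix.diagonal_mul_diagonal]
    have : (fun i => μ i * (μ i)⁻¹) = fun _ => (1:ℝ) := by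
      funext i; exact mul_inv_cancel₀ (hμpos i).ne'
    rw [this, Matrix.diagonal_one, Matrix.mul_one, hUs]
  set d : Fin n → ℝ := fun i => Real.exp (-μ i) - (μ i)⁻¹ * (1 - Real.exp (-μ i)) with hd
  have hone : (1 : Matrix (Fin n) (Fin n) ℝ) = U * 1 * star U := by
    rw [Matrix.mul_one, hUs]
  have hsubconj : ∀ X Y : Matrix (Fin n) (Fin n) ℝ,
      (U * X * star U) - (U * Y * star U) = U * (X - Y) * star U := by
    intro X Y
    rw [Matrix.mul_sub, Matrix.sub_mul]
  have hLrep : L = U * Matrix.diagonal d * star U := by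
    rw [hL, hExp, hInv]
    conv_lhs => rw [hone]
    rw [hsubconj, hmulconj, hsubconj]
    congr 2
    rw [← Matrix.diagonal_one, Matrix.diagonal_sub, Matrix.diagonal_mul_diagonal,
      Matrix.diagonal_sub]
  have hstarU : star U = Uᵀ := by
    rw [Matrix.star_eq_conjTranspose]
    rfl
  constructor
  · rw [Matrix.IsSymm, hLrep, hstarU]
    rw [Matrix.transpose_mul, Matrix.transpose_mul, Matrix.transpose_transpose,
      Matrix.diagonal_transpose, Matrix.mul_assoc]
  · have habs : ∀ i, |d i| < 0.3 := fun i => scalar_bound (hμpos i)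
    have hCLM : Matrix.toEuclideanCLM (𝕜 := ℝ) L =
        Matrix.toEuclideanCLM (𝕜 := ℝ) U * Matrix.toEuclideanCLM (𝕜 := ℝ) (Matrix.diagonal d) *
          Matrix.toEuclideanCLM (𝕜 := ℝ) (star U) := by
      rw [hLrep, _root_.map_mul, _root_.map_mul]
    have huU : (Matrix.toEuclideanCLM (𝕜 := ℝ) U) ∈
        unitary (EuclideanSpace ℝ (Fin n) →L[ℝ] EuclideanSpace ℝ (Fin n)) := by
      rw [Unitary.mem_iff]
      constructor
      · rw [← map_star, ← _root_.map_mul, hsU, _root_.map_one]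
      · rw [← map_star, ← _root_.map_mul, hUs, _root_.map_one]
    have hnormeq : ‖Matrix.toEuclideanCLM (𝕜 := ℝ) L‖ =
        ‖Matrix.toEuclideanCLM (𝕜 := ℝ) (Matrix.diagonal d)‖ := by
      rw [hCLM, map_star]
      rw [CStarRing.norm_mul_mem_unitary _ (Unitary.star_mem huU)]
      rw [CStarRing.norm_mem_unitary_mul _ huU]
    rw [hnormeq]
    rcases Nat.eq_zero_or_pos n with hn | hn
    · subst hn
      have : (Matrix.diagonal d) = 0 := Subsingleton.elim _ _
      rw [this, map_zero, norm_zero]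
      norm_num
    · have hne : Nonempty (Fin n) := ⟨⟨0, hn⟩⟩
      obtain ⟨c, hc0, hcm, hclt⟩ : ∃ c : ℝ, 0 ≤ c ∧ (∀ i, |d i| ≤ c) ∧ c < 0.3 := by
        refine ⟨Finset.univ.sup' Finset.univ_nonempty (fun i => |d i|), ?_, ?_, ?_⟩
        · exact le_trans (abs_nonneg (d (Classical.arbitrary (Fin n))))
            (Finset.le_sup' (fun j => |d j|) (Finset.mem_univ (Classical.arbitrary (Fin n))))
        · exact fun i => Finset.le_sup' (fun j => |d j|) (Finset.mem_univ i)
        · rw [Finset.sup'_lt_iff]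
          intro i _
          exact habs i
      exact lt_of_le_of_lt (diag_opnorm_le d hc0 hcm) hclt
end

section
/- Let A be a symmetric positive definite real n×n matrix, let f : ℝ → ℝⁿ be continuous and 1-periodic, and let u₀^π be the initial value of the unique 1-periodic solution of u' = -A u + f. Define the averaging iteration: given an initial guess v₀^{l-1} ∈ ℝⁿ, let u^l be the solution of u' = -A u + f with u^l(0) = v₀^{l-1}, solve A w̄^l = u^l(1) - u^l(0), and set v₀^l := u^l(1) + w̄^l. Then for every l ≥ 1, ‖v₀^l - u₀^π‖ ≤ 0.3 · ‖v₀^{l-1} - u₀^π‖; in particular, the iterates v₀^l converge to u₀^π geometrically with a rate independent of A and f. -/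
open Real RealInnerProductSpace

section Aux

private lemma nonneg_of_hasDerivAt' (g g' : ℝ → ℝ) (hg : ∀ x, HasDerivAt g (g' x) x)
    (h0 : g 0 = 0) (hpos : ∀ x, 0 ≤ x → 0 ≤ g' x) : ∀ x, 0 ≤ x → 0 ≤ g x := by
  intro x hx
  have hmono : MonotoneOn g (Set.Ici (0:ℝ)) := by
    apply monotoneOn_of_deriv_nonneg (convex_Ici 0)
    · exact (Differentiable.continuous fun y => (hg y).differentiableAt).continuousOn
    · exact fun y _ => (hg y).differentiableAt.differentiableWithinAt
    · intro y hy
      rw [(hg y).deriv]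
      exact hpos y (le_of_lt (by simpa using hy))
  have := hmono Set.self_mem_Ici hx hx
  linarith [h0 ▸ this]

private lemma scalar_ode (y : ℝ → ℝ) (c : ℝ) (hy : ∀ t, HasDerivAt y (-c * y t) t) :
    y 1 = Real.exp (-c) * y 0 := by
  have hg : ∀ t : ℝ, HasDerivAt (fun s => Real.exp (c * s) * y s) 0 t := by
    intro t
    have h1 : HasDerivAt (fun s : ℝ => Real.exp (c * s)) (Real.exp (c * t) * c) t := by
      exact ((Real.hasDerivAt_exp (c * t)).comp t ((hasDerivAt_id' t).const_mul c)).congr_deriv (by ring)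
    have H := h1.mul (hy t)
    refine H.congr_deriv ?_
    ring
  have hconst : (fun s => Real.exp (c * s) * y s) 1 = (fun s => Real.exp (c * s) * y s) 0 :=
    is_const_of_deriv_eq_zero (f := fun s => Real.exp (c * s) * y s)
      (fun t => (hg t).differentiableAt) (fun t => (hg t).deriv) 1 0
  simp only at hconst
  have hne : Real.exp c ≠ 0 := Real.exp_ne_zero c
  rw [Real.exp_neg]
  field_simp
  rw [mul_comm] at hconst
  simpa using hconst

private lemma hexp : ∀ x : ℝ, HasDerivAt (fun y : ℝ => Real.exp (-y)) (-Real.exp (-x)) x := by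
  intro x
  exact ((Real.hasDerivAt_exp (-x)).comp x (hasDerivAt_neg x)).congr_deriv (by ring)

private lemma q1 : ∀ x : ℝ, 0 ≤ x → 0 ≤ Real.exp (-x) - 1 + x := by
  apply nonneg_of_hasDerivAt' _ (fun x => -Real.exp (-x) + 1)
  · intro x
    exact ((hexp x).sub_const 1).add (hasDerivAt_id' x)
  · simp
  · intro x hx
    have h : Real.exp (-x) ≤ 1 := by
      rw [← Real.exp_zero]
      exact Real.exp_le_exp.2 (by linarith)
    linarith

private lemma q2 : ∀ x : ℝ, 0 ≤ x → 0 ≤ 1 - x + x^2/2 - Real.exp (-x) := by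
  apply nonneg_of_hasDerivAt' _ (fun x => -1 + x + Real.exp (-x))
  · intro x
    have H := (((hasDerivAt_const x (1:ℝ)).sub (hasDerivAt_id' x)).add
      ((hasDerivAt_pow 2 x).div_const 2)).sub (hexp x)
    have hEq : (-1 + x + Real.exp (-x)) = 0 - 1 + (2:ℕ) * x ^ (2-1) / 2 - -Real.exp (-x) := by
      push_cast; ring
    rw [hEq]; exact H
  · simp
  · intro x hx
    have := q1 x hx; linarith

private lemma q3 : ∀ x : ℝ, 0 ≤ x → 0 ≤ Real.exp (-x) - (1 - x + x^2/2 - x^3/6) := by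
  apply nonneg_of_hasDerivAt' _ (fun x => -Real.exp (-x) - (- 1 + x - x^2/2))
  · intro x
    have H := (hexp x).sub ((((hasDerivAt_const x (1:ℝ)).sub (hasDerivAt_id' x)).add ((hasDerivAt_pow 2 x).div_const 2)).sub ((hasDerivAt_pow 3 x).div_const 6))
    have hEq : (-Real.exp (-x) - (- 1 + x - x^2/2)) = -Real.exp (-x) - (0 - 1 + (2:ℕ) * x ^ (2-1) / 2 - (3:ℕ) * x ^ (3-1) / 6) := by push_cast; ring
    rw [hEq]; exact H
  · norm_num
  · intro x hx
    have := q2 x hx; linarith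

private lemma q4 : ∀ x : ℝ, 0 ≤ x → 0 ≤ (1 - x + x^2/2 - x^3/6 + x^4/24) - Real.exp (-x) := by
  apply nonneg_of_hasDerivAt' _ (fun x => (- 1 + x - x^2/2 + x^3/6) + Real.exp (-x))
  · intro x
    have H := (((((hasDerivAt_const x (1:ℝ)).sub (hasDerivAt_id' x)).add ((hasDerivAt_pow 2 x).div_const 2)).sub ((hasDerivAt_pow 3 x).div_const 6)).add ((hasDerivAt_pow 4 x).div_const 24)).sub (hexp x)
    have hEq : ((- 1 + x - x^2/2 + x^3/6) + Real.exp (-x)) = (0 - 1 + (2:ℕ) * x ^ (2-1) / 2 - (3:ℕ) * x ^ (3-1) / 6 + (4:ℕ) * x ^ (4-1) / 24) - -Real.exp (-x) := by push_cast; ring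
    rw [hEq]; exact H
  · norm_num
  · intro x hx
    have := q3 x hx; linarith

private lemma q5 : ∀ x : ℝ, 0 ≤ x → 0 ≤ Real.exp (-x) - (1 - x + x^2/2 - x^3/6 + x^4/24 - x^5/120) := by
  apply nonneg_of_hasDerivAt' _ (fun x => -Real.exp (-x) - (- 1 + x - x^2/2 + x^3/6 - x^4/24))
  · intro x
    have H := (hexp x).sub ((((((hasDerivAt_const x (1:ℝ)).sub (hasDerivAt_id' x)).add ((hasDerivAt_pow 2 x).div_const 2)).sub ((hasDerivAt_pow 3 x).div_const 6)).add ((hasDerivAt_pow 4 x).div_const 24)).sub ((hasDerivAt_pow 5 x).div_const 120))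
    have hEq : (-Real.exp (-x) - (- 1 + x - x^2/2 + x^3/6 - x^4/24)) = -Real.exp (-x) - (0 - 1 + (2:ℕ) * x ^ (2-1) / 2 - (3:ℕ) * x ^ (3-1) / 6 + (4:ℕ) * x ^ (4-1) / 24 - (5:ℕ) * x ^ (5-1) / 120) := by push_cast; ring
    rw [hEq]; exact H
  · norm_num
  · intro x hx
    have := q4 x hx; linarith

private lemma q6 : ∀ x : ℝ, 0 ≤ x → 0 ≤ (1 - x + x^2/2 - x^3/6 + x^4/24 - x^5/120 + x^6/720) - Real.exp (-x) := by
  apply nonneg_of_hasDerivAt' _ (fun x => (- 1 + x - x^2/2 + x^3/6 - x^4/24 + x^5/120) + Real.exp (-x))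
  · intro x
    have H := (((((((hasDerivAt_const x (1:ℝ)).sub (hasDerivAt_id' x)).add ((hasDerivAt_pow 2 x).div_const 2)).sub ((hasDerivAt_pow 3 x).div_const 6)).add ((hasDerivAt_pow 4 x).div_const 24)).sub ((hasDerivAt_pow 5 x).div_const 120)).add ((hasDerivAt_pow 6 x).div_const 720)).sub (hexp x)
    have hEq : ((- 1 + x - x^2/2 + x^3/6 - x^4/24 + x^5/120) + Real.exp (-x)) = (0 - 1 + (2:ℕ) * x ^ (2-1) / 2 - (3:ℕ) * x ^ (3-1) / 6 + (4:ℕ) * x ^ (4-1) / 24 - (5:ℕ) * x ^ (5-1) / 120 + (6:ℕ) * x ^ (6-1) / 720) - -Real.exp (-x) := by push_cast; ring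
    rw [hEq]; exact H
  · norm_num
  · intro x hx
    have := q5 x hx; linarith

private lemma q7 : ∀ x : ℝ, 0 ≤ x → 0 ≤ Real.exp (-x) - (1 - x + x^2/2 - x^3/6 + x^4/24 - x^5/120 + x^6/720 - x^7/5040) := by
  apply nonneg_of_hasDerivAt' _ (fun x => -Real.exp (-x) - (- 1 + x - x^2/2 + x^3/6 - x^4/24 + x^5/120 - x^6/720))
  · intro x
    have H := (hexp x).sub ((((((((hasDerivAt_const x (1:ℝ)).sub (hasDerivAt_id' x)).add ((hasDerivAt_pow 2 x).div_const 2)).sub ((hasDerivAt_pow 3 x).div_const 6)).add ((hasDerivAt_pow 4 x).div_const 24)).sub ((hasDerivAt_pow 5 x).div_const 120)).add ((hasDerivAt_pow 6 x).div_const 720)).sub ((hasDerivAt_pow 7 x).div_const 5040))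
    have hEq : (-Real.exp (-x) - (- 1 + x - x^2/2 + x^3/6 - x^4/24 + x^5/120 - x^6/720)) = -Real.exp (-x) - (0 - 1 + (2:ℕ) * x ^ (2-1) / 2 - (3:ℕ) * x ^ (3-1) / 6 + (4:ℕ) * x ^ (4-1) / 24 - (5:ℕ) * x ^ (5-1) / 120 + (6:ℕ) * x ^ (6-1) / 720 - (7:ℕ) * x ^ (7-1) / 5040) := by push_cast; ring
    rw [hEq]; exact H
  · norm_num
  · intro x hx
    have := q6 x hx; linarith

private lemma q8 : ∀ x : ℝ, 0 ≤ x → 0 ≤ (1 - x + x^2/2 - x^3/6 + x^4/24 - x^5/120 + x^6/720 - x^7/5040 + x^8/40320) - Real.exp (-x) := by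
  apply nonneg_of_hasDerivAt' _ (fun x => (- 1 + x - x^2/2 + x^3/6 - x^4/24 + x^5/120 - x^6/720 + x^7/5040) + Real.exp (-x))
  · intro x
    have H := (((((((((hasDerivAt_const x (1:ℝ)).sub (hasDerivAt_id' x)).add ((hasDerivAt_pow 2 x).div_const 2)).sub ((hasDerivAt_pow 3 x).div_const 6)).add ((hasDerivAt_pow 4 x).div_const 24)).sub ((hasDerivAt_pow 5 x).div_const 120)).add ((hasDerivAt_pow 6 x).div_const 720)).sub ((hasDerivAt_pow 7 x).div_const 5040)).add ((hasDerivAt_pow 8 x).div_const 40320)).sub (hexp x)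
    have hEq : ((- 1 + x - x^2/2 + x^3/6 - x^4/24 + x^5/120 - x^6/720 + x^7/5040) + Real.exp (-x)) = (0 - 1 + (2:ℕ) * x ^ (2-1) / 2 - (3:ℕ) * x ^ (3-1) / 6 + (4:ℕ) * x ^ (4-1) / 24 - (5:ℕ) * x ^ (5-1) / 120 + (6:ℕ) * x ^ (6-1) / 720 - (7:ℕ) * x ^ (7-1) / 5040 + (8:ℕ) * x ^ (8-1) / 40320) - -Real.exp (-x) := by push_cast; ring
    rw [hEq]; exact H
  · norm_num
  · intro x hx
    have := q7 x hx; linarith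

private lemma q9 : ∀ x : ℝ, 0 ≤ x → 0 ≤ Real.exp (-x) - (1 - x + x^2/2 - x^3/6 + x^4/24 - x^5/120 + x^6/720 - x^7/5040 + x^8/40320 - x^9/362880) := by
  apply nonneg_of_hasDerivAt' _ (fun x => -Real.exp (-x) - (- 1 + x - x^2/2 + x^3/6 - x^4/24 + x^5/120 - x^6/720 + x^7/5040 - x^8/40320))
  · intro x
    have H := (hexp x).sub ((((((((((hasDerivAt_const x (1:ℝ)).sub (hasDerivAt_id' x)).add ((hasDerivAt_pow 2 x).div_const 2)).sub ((hasDerivAt_pow 3 x).div_const 6)).add ((hasDerivAt_pow 4 x).div_const 24)).sub ((hasDerivAt_pow 5 x).div_const 120)).add ((hasDerivAt_pow 6 x).div_const 720)).sub ((hasDerivAt_pow 7 x).div_const 5040)).add ((hasDerivAt_pow 8 x).div_const 40320)).sub ((hasDerivAt_pow 9 x).div_const 362880))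
    have hEq : (-Real.exp (-x) - (- 1 + x - x^2/2 + x^3/6 - x^4/24 + x^5/120 - x^6/720 + x^7/5040 - x^8/40320)) = -Real.exp (-x) - (0 - 1 + (2:ℕ) * x ^ (2-1) / 2 - (3:ℕ) * x ^ (3-1) / 6 + (4:ℕ) * x ^ (4-1) / 24 - (5:ℕ) * x ^ (5-1) / 120 + (6:ℕ) * x ^ (6-1) / 720 - (7:ℕ) * x ^ (7-1) / 5040 + (8:ℕ) * x ^ (8-1) / 40320 - (9:ℕ) * x ^ (9-1) / 362880) := by push_cast; ring
    rw [hEq]; exact H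
  · norm_num
  · intro x hx
    have := q8 x hx; linarith


private lemma exp_ten_le : Real.exp (10/3 : ℝ) ≤ 40 := by
  have h1 : Real.exp 1 ≤ 2.7182818286 := Real.exp_one_lt_d9.le
  have h3 : Real.exp (10/3 : ℝ) ^ 3 = Real.exp 10 := by
    rw [← Real.exp_nat_mul]; norm_num
  have h10 : Real.exp 10 = Real.exp 1 ^ 10 := by
    rw [← Real.exp_nat_mul]; norm_num
  have h2 : Real.exp 10 ≤ (2.7182818286:ℝ) ^ 10 := by
    rw [h10]
    exact pow_le_pow_left₀ (Real.exp_pos 1).le h1 10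
  have : Real.exp (10/3 : ℝ) ^ 3 ≤ (40:ℝ)^3 := by
    rw [h3]
    calc Real.exp 10 ≤ (2.7182818286:ℝ) ^ 10 := h2
    _ ≤ (40:ℝ)^3 := by norm_num
  exact le_of_pow_le_pow_left₀ (by norm_num) (by norm_num) this

private lemma phi_bound (μ : ℝ) (hμ : 0 < μ) :
    |Real.exp (-μ) + (Real.exp (-μ) - 1) / μ| ≤ 0.3 := by
  set E := Real.exp (-μ) with hE
  have hE0 : 0 < E := Real.exp_pos _
  have hkey : E + (E - 1) / μ = ((1 + μ) * E - 1) / μ := by field_simp; ring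
  rw [hkey, abs_le]
  have hup : (1 + μ) * E ≤ 1 := by
    have h1 : μ + 1 ≤ Real.exp μ := Real.add_one_le_exp μ
    have h2 : E * Real.exp μ = 1 := by
      rw [hE, ← Real.exp_add]; simp
    nlinarith
  constructor
  · -- lower bound: -0.3 ≤ ((1+μ)E - 1)/μ  ⟺  0 ≤ (1+μ)E - 1 + 0.3 μ
    rw [neg_le, ← neg_div, div_le_iff₀ hμ]
    -- goal : -((1+μ)*E - 1) ≤ 0.3 * μ  (or similar); handle via nlinarith after case split
    have hmain : 0 ≤ (1 + μ) * E - 1 + 0.3 * μ := by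
      rcases le_or_gt μ 3 with h3 | h3
      · have hp := q9 μ hμ.le
        have hpoly : 0 ≤ 108864 - 181440*μ + 120960*μ^2 - 45360*μ^3 + 12096*μ^4 - 2520*μ^5
            + 432*μ^6 - 63*μ^7 + 8*μ^8 - μ^9 := by
          nlinarith [sq_nonneg (μ-9/5), sq_nonneg (μ^2-3*μ), sq_nonneg (μ^2 - 18/5*μ + 2),
            mul_nonneg hμ.le (sub_nonneg.2 h3), sq_nonneg (μ*(3-μ)), sq_nonneg ((μ-2)*(3-μ)),
            sq_nonneg (μ-2), sq_nonneg (μ-1), mul_nonneg (mul_nonneg hμ.le hμ.le) (sub_nonneg.2 h3),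
            sq_nonneg (μ^3 - 5*μ^2+ 6*μ)]
        nlinarith [mul_nonneg hμ.le hpoly, mul_le_mul_of_nonneg_left hp (by linarith : (0:ℝ) ≤ 1 + μ)]
      · rcases le_or_gt μ (10/3) with h103 | h103
        · have hEge : 1/40 ≤ E := by
            rw [hE]
            have : Real.exp (-(10/3:ℝ)) ≤ Real.exp (-μ) := Real.exp_le_exp.2 (by linarith)
            have h40 : 1/40 ≤ Real.exp (-(10/3:ℝ)) := by
              rw [Real.exp_neg, one_div]
              exact inv_anti₀ (Real.exp_pos _) exp_ten_le
            linarith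
          nlinarith
        · nlinarith [mul_pos (by linarith : (0:ℝ) < 1 + μ) hE0]
    nlinarith
  · have : ((1 + μ) * E - 1) / μ ≤ 0 :=
      div_nonpos_iff.2 (Or.inr ⟨by linarith, hμ.le⟩)
    linarith

end Aux



open Filter Topology

/-- Convergence of the averaging scheme in the continuous linear
setting.  For the model problem `u' = -A u + f` with `A` symmetric positive definite
and `f` continuous `1`-periodic, one step of the averaging iteration (integrate one
cycle from the current initial guess `v l`, solve `A w̄ = u(1) - u(0)`, and set the new
initial value to `u(1) + w̄`) contracts the distance to the initial value `uπ(0)` of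
the unique `1`-periodic solution by the factor `0.3`, independently of `A` and `f`;
in particular the iterates converge geometrically to `uπ(0)`. -/
theorem candy_wrapper_stmt6
    (n : ℕ) (A : Matrix (Fin n) (Fin n) ℝ)
    (hA_symm : A.IsSymm) (hA_pos : A.PosDef)
    (f : ℝ → EuclideanSpace ℝ (Fin n))
    (hf_cont : Continuous f) (hf_per : Function.Periodic f 1)
    (uπ : ℝ → EuclideanSpace ℝ (Fin n))
    (huπ_sol : ∀ t : ℝ, HasDerivAt uπ (-(Matrix.toEuclideanLin A (uπ t)) + f t) t)
    (huπ_per : Function.Periodic uπ 1)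
    -- the averaging iteration: `u l` is the trajectory started from the guess `v l`,
    -- `w l` the averaging correction, and `v (l+1)` the updated initial value
    (u : ℕ → ℝ → EuclideanSpace ℝ (Fin n))
    (v : ℕ → EuclideanSpace ℝ (Fin n))
    (w : ℕ → EuclideanSpace ℝ (Fin n))
    (hu_sol : ∀ l : ℕ, ∀ t : ℝ,
      HasDerivAt (u l) (-(Matrix.toEuclideanLin A (u l t)) + f t) t)
    (hu_init : ∀ l : ℕ, u l 0 = v l)
    (hw : ∀ l : ℕ, Matrix.toEuclideanLin A (w l) = u l 1 - u l 0)
    (hv : ∀ l : ℕ, v (l + 1) = u l 1 + w l) :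
    (∀ l : ℕ, ‖v (l + 1) - uπ 0‖ ≤ 0.3 * ‖v l - uπ 0‖) ∧
    (∀ l : ℕ, ‖v l - uπ 0‖ ≤ 0.3 ^ l * ‖v 0 - uπ 0‖) ∧
    Tendsto v atTop (𝓝 (uπ 0)) := by
  classical
  have hA : A.IsHermitian := hA_pos.1
  set T := Matrix.toEuclideanLin A with hT
  have hsymm : ∀ x y : EuclideanSpace ℝ (Fin n), ⟪T x, y⟫ = ⟪x, T y⟫ :=
    Matrix.isHermitian_iff_isSymmetric.1 hA
  set b := hA.eigenvectorBasis with hb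
  set μ := hA.eigenvalues with hμdef
  have hμpos : ∀ i, 0 < μ i := hA_pos.eigenvalues_pos
  have heig : ∀ i, T (b i) = μ i • b i := by
    intro i
    have h := hA.mulVec_eigenvectorBasis i
    ext j
    have := congrFun h j
    simpa [hT, Matrix.toEuclideanLin_apply] using this
  have hnorm : ∀ x : EuclideanSpace ℝ (Fin n), ‖x‖^2 = ∑ i, ⟪b i, x⟫^2 := by
    intro x
    have h := b.sum_inner_mul_inner x x
    rw [real_inner_self_eq_norm_sq] at h
    rw [← h]
    congr 1; funext i
    rw [real_inner_comm x (b i), sq]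
  have huπ1 : uπ 1 = uπ 0 := by simpa using huπ_per 0
  -- the contraction step
  have key : ∀ l : ℕ, ‖v (l + 1) - uπ 0‖ ≤ 0.3 * ‖v l - uπ 0‖ := by
    intro l
    set d : ℝ → EuclideanSpace ℝ (Fin n) := fun t => u l t - uπ t with hd_def
    have hd : ∀ t, HasDerivAt d (-(T (d t))) t := by
      intro t
      have H := (hu_sol l t).sub (huπ_sol t)
      refine H.congr_deriv ?_
      simp only [hd_def, hT, map_sub]
      abel
    have hAw : T (w l) = d 1 - d 0 := by
      rw [hT, hw l]
      simp only [hd_def]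
      rw [huπ1]
      abel
    have herr : v (l + 1) - uπ 0 = d 1 + w l := by
      rw [hv l]
      simp only [hd_def]
      rw [huπ1]
      abel
    have hd0 : d 0 = v l - uπ 0 := by
      simp only [hd_def, hu_init l]
    have hcomp : ∀ i, ⟪b i, v (l + 1) - uπ 0⟫ =
        (Real.exp (-(μ i)) + (Real.exp (-(μ i)) - 1) / (μ i)) * ⟪b i, v l - uπ 0⟫ := by
      intro i
      set y : ℝ → ℝ := fun t => ⟪b i, d t⟫ with hy_def
      have hy : ∀ t, HasDerivAt y (-(μ i) * y t) t := by
        intro t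
        have H := (innerSL ℝ (b i)).hasFDerivAt.comp_hasDerivAt t (hd t)
        refine H.congr_deriv ?_
        simp only [innerSL_apply_apply, hy_def]
        rw [inner_neg_right, ← hsymm (b i) (d t), heig i, real_inner_smul_left]
        ring
      have hy1 := scalar_ode y (μ i) hy
      have hwi : μ i * ⟪b i, w l⟫ = y 1 - y 0 := by
        have h1 : ⟪b i, T (w l)⟫ = y 1 - y 0 := by
          rw [hAw, inner_sub_right]
        rw [← h1, ← hsymm (b i) (w l), heig i, real_inner_smul_left]
      have hμi := hμpos i
      have hw2 : ⟪b i, w l⟫ = (y 1 - y 0) / (μ i) := by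
        rw [eq_div_iff hμi.ne']
        rw [mul_comm] at hwi
        exact hwi
      have hy0 : y 0 = ⟪b i, v l - uπ 0⟫ := by rw [hy_def]; simp only [hd0]
      rw [herr, inner_add_right, hw2, hy1, ← hy0]
      show y 1 + _ = _
      rw [hy1]
      field_simp
    have hsq : ‖v (l + 1) - uπ 0‖^2 ≤ (0.3 * ‖v l - uπ 0‖)^2 := by
      rw [hnorm, mul_pow, hnorm, Finset.mul_sum]
      apply Finset.sum_le_sum
      intro i _
      rw [hcomp i, mul_pow]
      have hbd := phi_bound (μ i) (hμpos i)
      have habs := abs_le.1 hbd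
      have h2 : (Real.exp (-(μ i)) + (Real.exp (-(μ i)) - 1) / (μ i))^2 ≤ (0.3:ℝ)^2 := by
        have := sq_le_sq' habs.1 habs.2
        simpa using this
      exact mul_le_mul_of_nonneg_right h2 (sq_nonneg _)
    have h03 : (0:ℝ) ≤ 0.3 * ‖v l - uπ 0‖ := by positivity
    have := Real.sqrt_le_sqrt hsq
    rwa [Real.sqrt_sq (norm_nonneg _), Real.sqrt_sq h03] at this
  refine ⟨key, ?_, ?_⟩
  · intro l
    induction l with
    | zero => simp
    | succ k ih =>
      calc ‖v (k + 1) - uπ 0‖ ≤ 0.3 * ‖v k - uπ 0‖ := key k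
      _ ≤ 0.3 * (0.3 ^ k * ‖v 0 - uπ 0‖) := by
          apply mul_le_mul_of_nonneg_left ih (by norm_num)
      _ = 0.3 ^ (k + 1) * ‖v 0 - uπ 0‖ := by ring
  · have hgeo : ∀ l : ℕ, ‖v l - uπ 0‖ ≤ 0.3 ^ l * ‖v 0 - uπ 0‖ := by
      intro l
      induction l with
      | zero => simp
      | succ k ih =>
        calc ‖v (k + 1) - uπ 0‖ ≤ 0.3 * ‖v k - uπ 0‖ := key k
        _ ≤ 0.3 * (0.3 ^ k * ‖v 0 - uπ 0‖) := by
            apply mul_le_mul_of_nonneg_left ih (by norm_num)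
        _ = 0.3 ^ (k + 1) * ‖v 0 - uπ 0‖ := by ring
    have h0 : Tendsto (fun l : ℕ => (0.3:ℝ) ^ l * ‖v 0 - uπ 0‖) atTop (𝓝 0) := by
      have := (tendsto_pow_atTop_nhds_zero_of_lt_one (by norm_num : (0:ℝ) ≤ 0.3)
        (by norm_num : (0.3:ℝ) < 1)).mul_const ‖v 0 - uπ 0‖
      simpa using this
    have hz : Tendsto (fun l : ℕ => v l - uπ 0) atTop (𝓝 0) :=
      squeeze_zero_norm hgeo h0
    have := hz.add_const (uπ 0)
    simpa using this
end
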